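/- Let M_Q = (q_{kα}) ∈ ℂ^{n×n} be a nonzero matrix whose columns are isotropic (Σ_{j=1}^n q_{jα}² = 0 for every α) and pairwise linearly dependent, and define Q : SO(n) → ℂ by Q(x) = Σ_{k,α} q_{kα}·x_{kα}. Then Q(x)² + 2·Σ_{1≤r<s≤n} Q(x·Y_rs)² = 0 for every x ∈ SO(n), i.e. Q² + 2·κ(Q,Q) = 0 on SO(n). -/

import Mathlib

open Matrix

/-- The matrix `Y_rs ∈ ℝ^{n×n}` with `(r,s)`-entry `1/√2`, `(s,r)`-entry `-1/√2` and
all other entries `0`; for `r < s` these form the canonical orthonormal basis of the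
Lie algebra `so(n)`. -/
noncomputable def Yso (n : ℕ) (r s : Fin n) : Matrix (Fin n) (Fin n) ℝ :=
  (Real.sqrt 2)⁻¹ • (Matrix.single r s 1 - Matrix.single s r 1)

/-- The special orthogonal group `SO(n) = {x : x·xᵀ = 1, det x = 1}`. -/
def SOGroup (n : ℕ) : Set (Matrix (Fin n) (Fin n) ℝ) :=
  {x | x * x.transpose = 1 ∧ x.det = 1}

/-- Lemma 9.2 (sufficiency): if the nonzero matrix `M_Q = (q_{kα})` has isotropic and
pairwise linearly dependent columns, then `Q(x) = Σ q_{kα} x_{kα}` satisfies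
`Q² + 2κ(Q,Q) = 0` on `SO(n)`. -/
theorem stmt_16 (n : ℕ) (hn : 2 ≤ n) (q : Matrix (Fin n) (Fin n) ℂ) (hq : q ≠ 0)
    (hiso : ∀ α : Fin n, ∑ j : Fin n, (q j α) ^ 2 = 0)
    (hdep : ∀ α β : Fin n, ∃ c d : ℂ, (c ≠ 0 ∨ d ≠ 0) ∧
      ∀ j : Fin n, c * q j α + d * q j β = 0)
    (Q : Matrix (Fin n) (Fin n) ℝ → ℂ)
    (hQdef : Q = fun x => ∑ k : Fin n, ∑ α : Fin n, q k α * (x k α : ℂ)) :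
    ∀ x ∈ SOGroup n,
      (Q x) ^ 2 + 2 * (∑ r : Fin n, ∑ s : Fin n,
        if r < s then (Q (x * Yso n r s)) ^ 2 else 0) = 0 := by
  intro x hx
  obtain ⟨hxo, -⟩ := hx
  -- orthogonality in entry form, complexified
  have hortho : ∀ j j' : Fin n,
      (∑ k : Fin n, (x j k : ℂ) * (x j' k : ℂ)) = if j = j' then 1 else 0 := by
    intro j j'
    have h := congrFun (congrFun hxo j) j'
    simp only [Matrix.mul_apply, Matrix.transpose_apply, Matrix.one_apply] at h
    calc ∑ k : Fin n, (x j k : ℂ) * (x j' k : ℂ)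
        = ((∑ k : Fin n, x j k * x j' k : ℝ) : ℂ) := by push_cast; ring
      _ = (((if j = j' then (1:ℝ) else 0) : ℝ) : ℂ) := by rw [h]
      _ = if j = j' then 1 else 0 := by split <;> simp
  set B : Fin n → Fin n → ℂ := fun r s => ∑ k : Fin n, (x k r : ℂ) * q k s with hBdef
  -- columns of B are isotropic
  have hBiso : ∀ α : Fin n, ∑ k : Fin n, (B k α) ^ 2 = 0 := by
    intro α
    calc ∑ k : Fin n, (B k α) ^ 2
        = ∑ k : Fin n, ∑ j : Fin n, ∑ j' : Fin n,
            ((x j k : ℂ) * q j α) * ((x j' k : ℂ) * q j' α) := by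
          refine Finset.sum_congr rfl fun k _ => ?_
          rw [hBdef, sq, Finset.sum_mul_sum]
      _ = ∑ j : Fin n, ∑ j' : Fin n, (q j α * q j' α) *
            ∑ k : Fin n, (x j k : ℂ) * (x j' k : ℂ) := by
          rw [Finset.sum_comm]
          refine Finset.sum_congr rfl fun j _ => ?_
          rw [Finset.sum_comm]
          refine Finset.sum_congr rfl fun j' _ => ?_
          rw [Finset.mul_sum]
          exact Finset.sum_congr rfl fun k _ => by ring
      _ = ∑ j : Fin n, ∑ j' : Fin n, (q j α * q j' α) * (if j = j' then 1 else 0) := by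
          refine Finset.sum_congr rfl fun j _ => Finset.sum_congr rfl fun j' _ => ?_
          rw [hortho]
      _ = ∑ j : Fin n, (q j α) ^ 2 := by
          refine Finset.sum_congr rfl fun j _ => ?_
          simp [mul_ite, Finset.sum_ite_eq, sq]
      _ = 0 := hiso α
  -- columns of B are pairwise dependent, hence 2x2 minors vanish
  have hBmin : ∀ r s : Fin n, B r r * B s s = B r s * B s r := by
    intro r s
    obtain ⟨c, d, hcd, h⟩ := hdep r s
    have hB : ∀ k : Fin n, c * B k r + d * B k s = 0 := by
      intro k
      rw [hBdef]
      simp only [Finset.mul_sum, ← Finset.sum_add_distrib]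
      refine Finset.sum_eq_zero fun j _ => ?_
      have := h j
      calc c * ((x j k : ℂ) * q j r) + d * ((x j k : ℂ) * q j s)
          = (x j k : ℂ) * (c * q j r + d * q j s) := by ring
        _ = 0 := by rw [this, mul_zero]
    rcases hcd with hc | hd
    · apply mul_left_cancel₀ hc
      linear_combination B s s * hB r - B r s * hB s
    · apply mul_left_cancel₀ hd
      linear_combination B r r * hB s - B s r * hB r
  -- value of Q at x
  have hQx : Q x = ∑ r : Fin n, B r r := by
    rw [hQdef, hBdef]
    rw [Finset.sum_comm]
    exact Finset.sum_congr rfl fun r _ => Finset.sum_congr rfl fun k _ => by ring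
  -- the entries of x * Yso
  have hent : ∀ r s k α : Fin n, (x * Yso n r s) k α =
      (Real.sqrt 2)⁻¹ * ((if α = s then x k r else 0) - (if α = r then x k s else 0)) := by
    intro r s k α
    rw [Yso, Matrix.mul_smul, Matrix.smul_apply, Matrix.mul_sub, Matrix.sub_apply,
      smul_eq_mul]
    congr 1
    congr 1
    · by_cases h : α = s
      · subst h; simp
      · simp [h]
    · by_cases h : α = r
      · subst h; simp
      · simp [h]
  -- value of Q at x * Yso
  have hQY : ∀ r s : Fin n, Q (x * Yso n r s) =
      (((Real.sqrt 2)⁻¹ : ℝ) : ℂ) * (B r s - B s r) := by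
    intro r s
    rw [hQdef]
    simp only [hent]
    simp only [apply_ite (fun t : ℝ => (t : ℂ)), Complex.ofReal_zero, Complex.ofReal_mul,
      Complex.ofReal_sub, Complex.ofReal_inv]
    simp only [mul_sub, mul_ite, mul_zero, Finset.sum_sub_distrib, Finset.sum_ite_eq',
      Finset.mem_univ, if_true]
    rw [hBdef]
    simp only [Finset.mul_sum, ← Finset.sum_sub_distrib]
    exact Finset.sum_congr rfl fun k _ => by ring
  have hsqrt : ((((Real.sqrt 2)⁻¹ : ℝ) : ℂ)) ^ 2 = 1 / 2 := by
    have h2 : (Real.sqrt 2) ^ 2 = 2 := Real.sq_sqrt (by norm_num)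
    have : ((Real.sqrt 2)⁻¹ : ℝ) ^ 2 = 1 / 2 := by
      rw [inv_pow, h2]; norm_num
    calc ((((Real.sqrt 2)⁻¹ : ℝ) : ℂ)) ^ 2 = ((((Real.sqrt 2)⁻¹ : ℝ) ^ 2 : ℝ) : ℂ) := by
          push_cast; ring
      _ = 1 / 2 := by rw [this]; norm_num
  -- the summand value
  have hval : ∀ r s : Fin n, (Q (x * Yso n r s)) ^ 2 = (1/2) * (B r s - B s r) ^ 2 := by
    intro r s
    rw [hQY, mul_pow, hsqrt]
  -- symmetrization of the triangular sum
  have hsplit : ∀ (f : Fin n → Fin n → ℂ), (∀ r s, f r s = f s r) → (∀ r, f r r = 0) →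
      2 * (∑ r : Fin n, ∑ s : Fin n, if r < s then f r s else 0)
        = ∑ r : Fin n, ∑ s : Fin n, f r s := by
    intro f hsymm hdiag
    have key : ∀ r s : Fin n, f r s = (if r < s then f r s else 0)
        + (if s < r then f r s else 0) + (if r = s then f r s else 0) := by
      intro r s
      rcases lt_trichotomy r s with h | h | h
      · simp [h, lt_asymm h, h.ne]
      · subst h; simp [lt_irrefl]
      · simp [h, lt_asymm h, h.ne']
    have h1 : (∑ r : Fin n, ∑ s : Fin n, if s < r then f r s else 0)
        = ∑ r : Fin n, ∑ s : Fin n, if r < s then f r s else 0 := by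
      rw [Finset.sum_comm]
      exact Finset.sum_congr rfl fun r _ => Finset.sum_congr rfl fun s _ => by
        rw [hsymm r s]
    have h2 : (∑ r : Fin n, ∑ s : Fin n, if r = s then f r s else 0) = 0 := by
      refine Finset.sum_eq_zero fun r _ => ?_
      rw [Finset.sum_ite_eq]
      simp [hdiag]
    calc 2 * (∑ r : Fin n, ∑ s : Fin n, if r < s then f r s else 0)
        = (∑ r : Fin n, ∑ s : Fin n, if r < s then f r s else 0)
          + (∑ r : Fin n, ∑ s : Fin n, if s < r then f r s else 0)
          + (∑ r : Fin n, ∑ s : Fin n, if r = s then f r s else 0) := by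
          rw [h1, h2]; ring
      _ = ∑ r : Fin n, ∑ s : Fin n, f r s := by
          simp only [← Finset.sum_add_distrib]
          exact Finset.sum_congr rfl fun r _ => Finset.sum_congr rfl fun s _ =>
            (key r s).symm
  have hfsymm : ∀ r s : Fin n, (Q (x * Yso n r s)) ^ 2 = (Q (x * Yso n s r)) ^ 2 := by
    intro r s; rw [hval, hval]; ring
  have hfdiag : ∀ r : Fin n, (Q (x * Yso n r r)) ^ 2 = 0 := by
    intro r; rw [hval]; ring
  rw [show (∑ r : Fin n, ∑ s : Fin n, if r < s then (Q (x * Yso n r s)) ^ 2 else 0)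
      = (∑ r : Fin n, ∑ s : Fin n, if r < s then
        (fun r s => (Q (x * Yso n r s)) ^ 2) r s else 0) from rfl]
  rw [mul_comm (2:ℂ), ← mul_comm (2:ℂ)]
  rw [hsplit _ hfsymm hfdiag]
  -- now pure algebra
  have T1 : ∑ r : Fin n, ∑ s : Fin n, (B r s) ^ 2 = 0 := by
    rw [Finset.sum_comm]
    exact Finset.sum_eq_zero fun s _ => hBiso s
  have T2 : ∑ r : Fin n, ∑ s : Fin n, B r s * B s r = (∑ r : Fin n, B r r) ^ 2 := by
    rw [sq, Finset.sum_mul_sum]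
    exact Finset.sum_congr rfl fun r _ => Finset.sum_congr rfl fun s _ =>
      (hBmin r s).symm
  have expand : ∑ r : Fin n, ∑ s : Fin n, (fun r s => (Q (x * Yso n r s)) ^ 2) r s
      = (∑ r : Fin n, ∑ s : Fin n, (B r s) ^ 2)
        - (∑ r : Fin n, ∑ s : Fin n, B r s * B s r) := by
    have hBsq : ∑ r : Fin n, ∑ s : Fin n, (B s r) ^ 2
        = ∑ r : Fin n, ∑ s : Fin n, (B r s) ^ 2 := Finset.sum_comm
    calc ∑ r : Fin n, ∑ s : Fin n, (fun r s => (Q (x * Yso n r s)) ^ 2) r s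
        = ∑ r : Fin n, ∑ s : Fin n,
            ((1/2) * (B r s)^2 + (1/2) * (B s r)^2 - B r s * B s r) := by
          refine Finset.sum_congr rfl fun r _ => Finset.sum_congr rfl fun s _ => ?_
          simp only
          rw [hval]; ring
      _ = (1/2) * (∑ r : Fin n, ∑ s : Fin n, (B r s)^2)
            + (1/2) * (∑ r : Fin n, ∑ s : Fin n, (B s r)^2)
            - ∑ r : Fin n, ∑ s : Fin n, B r s * B s r := by
          simp only [Finset.sum_sub_distrib, Finset.sum_add_distrib, Finset.mul_sum]
      _ = _ := by rw [hBsq]; ring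
  rw [expand, hQx, T1, T2]
  ring
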